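/- For every set I there is a function c : (I → {0,1}) → ℤ/2ℤ such that whenever η, ν : I → {0,1} differ in exactly one coordinate, c(η) ≠ c(ν). -/

import Mathlib

open scoped symmDiff

theorem stmt15 (I : Type*) :
    ∃ c : (I → Bool) → ZMod 2,
      ∀ η ν : I → Bool, (∃! i : I, η i ≠ ν i) → c η ≠ c ν := by
  classical
  let s : Setoid (I → Bool) :=
    ⟨fun η ν => {i | η i ≠ ν i}.Finite, by
      refine ⟨fun η => by simp, fun {η ν} h => ?_, fun {η ν ρ} h1 h2 => ?_⟩
      · convert h using 1; ext i; exact ne_comm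
      · refine (h1.union h2).subset fun i hi => ?_
        simp only [Set.mem_union, Set.mem_setOf_eq]
        by_contra hc
        push_neg at hc
        exact hi (hc.1.trans hc.2)⟩
  have fin : ∀ η : I → Bool, {i | η i ≠ (Quotient.mk s η).out i}.Finite := by
    intro η
    have : η ≈ (Quotient.mk s η).out := Quotient.exact (Quotient.out_eq _).symm
    exact this
  refine ⟨fun η => ((fin η).toFinset.card : ZMod 2), ?_⟩
  intro η ν h
  obtain ⟨i₀, hi₀, huniq⟩ := h
  have hequiv : η ≈ ν := by
    refine Set.Finite.subset (Set.finite_singleton i₀) ?_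
    intro i hi
    exact huniq i hi
  have hq : (Quotient.mk s η) = (Quotient.mk s ν) := Quotient.sound hequiv
  set r := (Quotient.mk s η).out with hr
  set A := (fin η).toFinset with hA
  have hBr : (Quotient.mk s ν).out = r := by rw [← hq]
  set B := (fin ν).toFinset with hB
  have hBmem : ∀ i, i ∈ B ↔ ν i ≠ r i := by
    intro i
    simp only [hB, Set.Finite.mem_toFinset, Set.mem_setOf_eq, hBr]
  have hAmem : ∀ i, i ∈ A ↔ η i ≠ r i := by
    intro i
    simp only [hA, Set.Finite.mem_toFinset, Set.mem_setOf_eq]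
    exact Iff.rfl
  have hsymm : A ∆ B = {i₀} := by
    ext i
    simp only [Finset.mem_symmDiff, hAmem, hBmem, Finset.mem_singleton]
    constructor
    · intro h
      apply huniq
      cases h1 : η i <;> cases h2 : ν i <;> cases h3 : r i <;> simp_all
    · intro hi
      subst hi
      revert hi₀
      cases h1 : η i <;> cases h2 : ν i <;> cases h3 : r i <;> simp_all
  have hcard : A.card + B.card = (A ∆ B).card + 2 * (A ∩ B).card := by
    have h1 : (A ∪ B).card + (A ∩ B).card = A.card + B.card :=
      Finset.card_union_add_card_inter A B
    have h2 : (A ∆ B).card + (A ∩ B).card = (A ∪ B).card := by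
      have hu : A ∆ B ∪ A ∩ B = A ∪ B := by
        simpa [Finset.sup_eq_union, Finset.inf_eq_inter] using symmDiff_sup_inf A B
      rw [← hu, Finset.card_union_of_disjoint]
      simpa [Finset.inf_eq_inter] using disjoint_symmDiff_inf A B
    omega
  have h2z : (2 : ZMod 2) = 0 := rfl
  have key : (A.card : ZMod 2) + (B.card : ZMod 2) = 1 := by
    have := congrArg (Nat.cast : ℕ → ZMod 2) hcard
    push_cast at this
    rw [hsymm] at this
    simpa [h2z] using this
  intro hc
  change (A.card : ZMod 2) = (B.card : ZMod 2) at hc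
  rw [hc, ← two_mul, h2z, zero_mul] at key
  exact zero_ne_one key
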